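/- The number of separable d-permutations of {1,2,3} equals 2^(d-1)·(2^d − 1). -/

import Mathlib

/-- `P` is a `d`-permutation: a sequence of `d` permutations of `[n]`
whose first entry is the identity. -/
def IsDPerm {d n : ℕ} (P : Fin d → Equiv.Perm (Fin n)) : Prop :=
  ∀ h : 0 < d, P ⟨0, h⟩ = 1

/-- Separability of the restriction of the `d` rows `P` to the block of
columns `[a, b)`: either the block consists of a single column, or it can be
split into two consecutive sub-blocks such that in each row all entries of one
sub-block are smaller than all entries of the other, and both sub-blocks are
themselves separable. -/
inductive SepOn {d : ℕ} (P : Fin d → ℕ → ℕ) : ℕ → ℕ → Prop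
  | single (a : ℕ) : SepOn P a (a + 1)
  | split (a l b : ℕ) (h1 : a < l) (h2 : l < b)
      (hmono : ∀ i : Fin d,
        (∀ j1 j2, a ≤ j1 → j1 < l → l ≤ j2 → j2 < b → P i j1 < P i j2) ∨
        (∀ j1 j2, a ≤ j1 → j1 < l → l ≤ j2 → j2 < b → P i j2 < P i j1))
      (hL : SepOn P a l) (hR : SepOn P l b) : SepOn P a b

/-- The rows of a `d`-permutation, as functions `ℕ → ℕ`. -/
def dPermRows {d n : ℕ} (P : Fin d → Equiv.Perm (Fin n)) : Fin d → ℕ → ℕ :=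
  fun i j => if h : j < n then (P i ⟨j, h⟩ : ℕ) else 0

/-- A `d`-permutation of `[n]` is separable if its full block of columns is
recursively separable. -/
def IsSepDPerm {d n : ℕ} (P : Fin d → Equiv.Perm (Fin n)) : Prop :=
  SepOn (dPermRows P) 0 n




def rowA (σ : Equiv.Perm (Fin 3)) : Prop := σ 0 = 0 ∨ σ 0 = 2
def rowB (σ : Equiv.Perm (Fin 3)) : Prop := σ 2 = 0 ∨ σ 2 = 2

instance : DecidablePred rowA := fun σ => by unfold rowA; infer_instance
instance : DecidablePred rowB := fun σ => by unfold rowB; infer_instance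

lemma L1 (σ : Equiv.Perm (Fin 3)) (h1 : (σ 0 : ℕ) < σ 1) (h2 : (σ 0 : ℕ) < σ 2) : rowA σ := by
  revert h1 h2; revert σ; decide

lemma L2 (σ : Equiv.Perm (Fin 3)) (h1 : (σ 1 : ℕ) < σ 0) (h2 : (σ 2 : ℕ) < σ 0) : rowA σ := by
  revert h1 h2; revert σ; decide

lemma L3 (σ : Equiv.Perm (Fin 3)) (h1 : (σ 0 : ℕ) < σ 2) (h2 : (σ 1 : ℕ) < σ 2) : rowB σ := by
  revert h1 h2; revert σ; decide

lemma L4 (σ : Equiv.Perm (Fin 3)) (h1 : (σ 2 : ℕ) < σ 0) (h2 : (σ 2 : ℕ) < σ 1) : rowB σ := by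
  revert h1 h2; revert σ; decide

lemma L5 (σ : Equiv.Perm (Fin 3)) (h : rowA σ) :
    ((σ 0 : ℕ) < σ 1 ∧ (σ 0 : ℕ) < σ 2) ∨ ((σ 1 : ℕ) < σ 0 ∧ (σ 2 : ℕ) < σ 0) := by
  revert h; revert σ; decide

lemma L6 (σ : Equiv.Perm (Fin 3)) (h : rowB σ) :
    ((σ 0 : ℕ) < σ 2 ∧ (σ 1 : ℕ) < σ 2) ∨ ((σ 2 : ℕ) < σ 0 ∧ (σ 2 : ℕ) < σ 1) := by
  revert h; revert σ; decide

lemma L7 (σ : Equiv.Perm (Fin 3)) : (σ 1 : ℕ) < σ 2 ∨ (σ 2 : ℕ) < σ 1 := by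
  revert σ; decide


lemma rows_eq {d : ℕ} (P : Fin d → Equiv.Perm (Fin 3)) (i : Fin d) (j : ℕ) (h : j < 3) :
    dPermRows P i j = ((P i ⟨j, h⟩ : Fin 3) : ℕ) := dif_pos h

lemma sep_iff {d : ℕ} (P : Fin d → Equiv.Perm (Fin 3)) :
    IsSepDPerm P ↔ (∀ i, rowA (P i)) ∨ (∀ i, rowB (P i)) := by
  constructor
  · intro h
    cases h with
    | split a l b h1 h2 hmono hL hR =>
      interval_cases l
      · left
        intro i
        rcases hmono i with hm | hm
        · have h01 := hm 0 1 (by omega) (by omega) (by omega) (by omega)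
          have h02 := hm 0 2 (by omega) (by omega) (by omega) (by omega)
          rw [rows_eq P i 0 (by omega), rows_eq P i 1 (by omega)] at h01
          rw [rows_eq P i 0 (by omega), rows_eq P i 2 (by omega)] at h02
          exact L1 (P i) h01 h02
        · have h01 := hm 0 1 (by omega) (by omega) (by omega) (by omega)
          have h02 := hm 0 2 (by omega) (by omega) (by omega) (by omega)
          rw [rows_eq P i 0 (by omega), rows_eq P i 1 (by omega)] at h01
          rw [rows_eq P i 0 (by omega), rows_eq P i 2 (by omega)] at h02
          exact L2 (P i) h01 h02
      · right
        intro i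
        rcases hmono i with hm | hm
        · have h02 := hm 0 2 (by omega) (by omega) (by omega) (by omega)
          have h12 := hm 1 2 (by omega) (by omega) (by omega) (by omega)
          rw [rows_eq P i 0 (by omega), rows_eq P i 2 (by omega)] at h02
          rw [rows_eq P i 1 (by omega), rows_eq P i 2 (by omega)] at h12
          exact L3 (P i) h02 h12
        · have h02 := hm 0 2 (by omega) (by omega) (by omega) (by omega)
          have h12 := hm 1 2 (by omega) (by omega) (by omega) (by omega)
          rw [rows_eq P i 0 (by omega), rows_eq P i 2 (by omega)] at h02
          rw [rows_eq P i 1 (by omega), rows_eq P i 2 (by omega)] at h12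
          exact L4 (P i) h02 h12
  · rintro (hA | hB)
    · refine SepOn.split 0 1 3 (by omega) (by omega) ?_ (SepOn.single 0) ?_
      · intro i
        rcases L5 (P i) (hA i) with ⟨ha, hb⟩ | ⟨ha, hb⟩
        · left
          intro j1 j2 hj1 hj1' hj2 hj2'
          have hj1'' : j1 = 0 := by omega
          interval_cases j2 <;> subst hj1'' <;>
            rw [rows_eq P i 0 (by omega)] <;>
            [rw [rows_eq P i 1 (by omega)]; rw [rows_eq P i 2 (by omega)]] <;>
            assumption
        · right
          intro j1 j2 hj1 hj1' hj2 hj2'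
          have hj1'' : j1 = 0 := by omega
          interval_cases j2 <;> subst hj1'' <;>
            rw [rows_eq P i 0 (by omega)] <;>
            [rw [rows_eq P i 1 (by omega)]; rw [rows_eq P i 2 (by omega)]] <;>
            assumption
      · refine SepOn.split 1 2 3 (by omega) (by omega) ?_ (SepOn.single 1) (SepOn.single 2)
        intro i
        rcases L7 (P i) with h | h
        · left
          intro j1 j2 hj1 hj1' hj2 hj2'
          have : j1 = 1 := by omega
          have : j2 = 2 := by omega
          subst_vars
          rw [rows_eq P i 1 (by omega), rows_eq P i 2 (by omega)]
          exact h
        · right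
          intro j1 j2 hj1 hj1' hj2 hj2'
          have : j1 = 1 := by omega
          have : j2 = 2 := by omega
          subst_vars
          rw [rows_eq P i 1 (by omega), rows_eq P i 2 (by omega)]
          exact h
    · refine SepOn.split 0 2 3 (by omega) (by omega) ?_ ?_ (SepOn.single 2)
      · intro i
        rcases L6 (P i) (hB i) with ⟨ha, hb⟩ | ⟨ha, hb⟩
        · left
          intro j1 j2 hj1 hj1' hj2 hj2'
          have hj2'' : j2 = 2 := by omega
          interval_cases j1 <;> subst hj2'' <;>
            rw [rows_eq P i 2 (by omega)] <;>
            [rw [rows_eq P i 0 (by omega)]; rw [rows_eq P i 1 (by omega)]] <;>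
            assumption
        · right
          intro j1 j2 hj1 hj1' hj2 hj2'
          have hj2'' : j2 = 2 := by omega
          interval_cases j1 <;> subst hj2'' <;>
            rw [rows_eq P i 2 (by omega)] <;>
            [rw [rows_eq P i 0 (by omega)]; rw [rows_eq P i 1 (by omega)]] <;>
            assumption
      · refine SepOn.split 0 1 2 (by omega) (by omega) ?_ (SepOn.single 0) (SepOn.single 1)
        intro i
        rcases (by revert i; exact fun i => (lt_or_gt_of_ne (fun hc => by
          have := (P i).injective (Fin.val_injective hc); simp at this)) :
          (P i 0 : ℕ) < P i 1 ∨ (P i 0 : ℕ) > P i 1) with h | h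
        · left
          intro j1 j2 hj1 hj1' hj2 hj2'
          have : j1 = 0 := by omega
          have : j2 = 1 := by omega
          subst_vars
          rw [rows_eq P i 0 (by omega), rows_eq P i 1 (by omega)]
          exact h
        · right
          intro j1 j2 hj1 hj1' hj2 hj2'
          have : j1 = 0 := by omega
          have : j2 = 1 := by omega
          subst_vars
          rw [rows_eq P i 0 (by omega), rows_eq P i 1 (by omega)]
          exact h

lemma card_rowA : Fintype.card {σ : Equiv.Perm (Fin 3) // rowA σ} = 4 := by decide
lemma card_rowB : Fintype.card {σ : Equiv.Perm (Fin 3) // rowB σ} = 4 := by decide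
lemma card_rowAB : Fintype.card {σ : Equiv.Perm (Fin 3) // rowA σ ∧ rowB σ} = 2 := by decide
lemma rowA_one : rowA 1 := by decide
lemma rowB_one : rowB 1 := by decide

lemma card_filter_all {p : Equiv.Perm (Fin 3) → Prop} [DecidablePred p] (m c : ℕ)
    (hc : Fintype.card {σ : Equiv.Perm (Fin 3) // p σ} = c) :
    (Finset.univ.filter (fun Q : Fin m → Equiv.Perm (Fin 3) => ∀ i, p (Q i))).card = c ^ m := by
  rw [← Fintype.card_subtype,
    Fintype.card_congr (Equiv.subtypePiEquivPi (p := fun _ => p))]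
  simp [hc]

/-- The number of separable d-permutations of `{1,2,3}` is `2^(d-1)·(2^d − 1)`. -/
theorem sep_dPerm_card_three (d : ℕ) (hd : 1 ≤ d) :
    Nat.card {P : Fin d → Equiv.Perm (Fin 3) // IsDPerm P ∧ IsSepDPerm P} =
      2 ^ (d - 1) * (2 ^ d - 1) := by
  obtain ⟨m, rfl⟩ : ∃ m, d = m + 1 := ⟨d - 1, by omega⟩
  have hiff : ∀ P : Fin (m+1) → Equiv.Perm (Fin 3),
      (IsDPerm P ∧ IsSepDPerm P) ↔
        (P 0 = 1 ∧ ((∀ i, rowA (P i)) ∨ (∀ i, rowB (P i)))) := by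
    intro P
    rw [sep_iff]
    unfold IsDPerm
    constructor
    · rintro ⟨h1, h2⟩; exact ⟨h1 (by omega), h2⟩
    · rintro ⟨h1, h2⟩; exact ⟨fun _ => h1, h2⟩
  rw [Nat.card_congr (Equiv.subtypeEquivRight hiff)]
  have e : {P : Fin (m+1) → Equiv.Perm (Fin 3) //
        P 0 = 1 ∧ ((∀ i, rowA (P i)) ∨ (∀ i, rowB (P i)))}
      ≃ {Q : Fin m → Equiv.Perm (Fin 3) // (∀ i, rowA (Q i)) ∨ (∀ i, rowB (Q i))} := by
    refine ⟨fun P => ⟨fun i => P.1 i.succ, ?_⟩, fun Q => ⟨Fin.cons 1 Q.1, ?_, ?_⟩, ?_, ?_⟩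
    · rcases P.2.2 with hA | hB
      · exact Or.inl fun i => hA i.succ
      · exact Or.inr fun i => hB i.succ
    · simp
    · rcases Q.2 with hA | hB
      · refine Or.inl fun i => ?_
        cases i using Fin.cases with
        | zero => simpa using rowA_one
        | succ j => simpa using hA j
      · refine Or.inr fun i => ?_
        cases i using Fin.cases with
        | zero => simpa using rowB_one
        | succ j => simpa using hB j
    · rintro ⟨P, hP0, hP⟩
      apply Subtype.ext
      funext i
      cases i using Fin.cases with
      | zero => simpa using hP0.symm
      | succ j => simp
    · rintro ⟨Q, hQ⟩
      apply Subtype.ext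
      funext i
      simp
  rw [Nat.card_congr e, Nat.card_eq_fintype_card, Fintype.card_subtype]
  rw [Finset.filter_or]
  have hU := card_filter_all (p := rowA) m 4 card_rowA
  have hV := card_filter_all (p := rowB) m 4 card_rowB
  have key := Finset.card_union_add_card_inter
    (Finset.univ.filter (fun Q : Fin m → Equiv.Perm (Fin 3) => ∀ i, rowA (Q i)))
    (Finset.univ.filter (fun Q : Fin m → Equiv.Perm (Fin 3) => ∀ i, rowB (Q i)))
  rw [← Finset.filter_and] at key
  have hI : (Finset.univ.filter (fun Q : Fin m → Equiv.Perm (Fin 3) =>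
      (∀ i, rowA (Q i)) ∧ (∀ i, rowB (Q i)))).card = 2 ^ m := by
    have hcongr : ∀ Q ∈ (Finset.univ : Finset (Fin m → Equiv.Perm (Fin 3))),
        (((∀ i, rowA (Q i)) ∧ (∀ i, rowB (Q i))) ↔ (∀ i, rowA (Q i) ∧ rowB (Q i))) :=
      fun Q _ => forall_and.symm
    rw [Finset.filter_congr hcongr]
    exact card_filter_all m 2 card_rowAB
  rw [hU, hV, hI] at key
  have h4 : (4:ℕ)^m = 2^m * 2^m := by rw [show (4:ℕ) = 2*2 from rfl, mul_pow]
  have hx : 1 ≤ 2^m := Nat.one_le_two_pow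
  simp only [Nat.add_sub_cancel, pow_succ]
  rw [h4] at key
  have hms : 2^m * (2^m * 2 - 1) = 2^m * (2^m * 2) - 2^m * 1 := Nat.mul_sub _ _ _
  have hr : 2^m * (2^m * 2) = 2^m * 2^m + 2^m * 2^m := by ring
  rw [hms, mul_one, hr]
  exact Nat.eq_sub_of_add_eq key
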